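/- Let S be a commutative (additive) semigroup admitting an invariant mean, let Z be a real Banach space, X = Z* its dual, and let F be a set-valued map assigning to each s ∈ S a nonempty, convex, norm-bounded, weak*-closed subset F(s) ⊆ X. Then F admits an additive selection (a map g : S → X with g(s+t) = g(s) + g(t) for all s, t ∈ S and g(s) ∈ F(s) for all s ∈ S) if and only if there exists a function f : S → X such that f(s+t) − f(t) ∈ F(s) for all s, t ∈ S. -/

import Mathlib

noncomputable section
open BoundedContinuousFunction NormedSpace

/-- For a bounded function `f` on a (discrete) additive semigroup `S`, the translate
`t ↦ f (t + s)`. -/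
def addTranslate {S : Type*} [AddCommSemigroup S] [TopologicalSpace S] [DiscreteTopology S]
    {E : Type*} [PseudoMetricSpace E] (f : S →ᵇ E) (s : S) : S →ᵇ E :=
  f.compContinuous ⟨fun t => t + s, continuous_of_discreteTopology⟩

/-- An invariant mean on a commutative additive semigroup `S`: a positive, norm-one
continuous linear functional `m` on the bounded real functions on `S` with `m 𝟙 = 1` and
`m (t ↦ f (t + s)) = m f` for all `f` and `s`. -/
def IsAddInvariantMean {S : Type*} [AddCommSemigroup S] [TopologicalSpace S]
    [DiscreteTopology S] (m : (S →ᵇ ℝ) →L[ℝ] ℝ) : Prop :=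
  (∀ f : S →ᵇ ℝ, (∀ t, 0 ≤ f t) → 0 ≤ m f) ∧ ‖m‖ = 1 ∧
  m (const S (1 : ℝ)) = 1 ∧
  ∀ (f : S →ᵇ ℝ) (s : S), m (addTranslate f s) = m f

section WeakDualAux
variable {Z : Type*} [NormedAddCommGroup Z] [NormedSpace ℝ Z]

instance weakDualLCS : LocallyConvexSpace ℝ (WeakDual ℝ Z) :=
  WeakBilin.locallyConvexSpace

/-- Every continuous linear functional on the weak-* dual is evaluation at a point. -/
lemma weakDual_dual_eval (φ : WeakDual ℝ Z →L[ℝ] ℝ) :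
    ∃ z : Z, ∀ x : WeakDual ℝ Z, φ x = x z := by
  haveI : Nonempty Z := ⟨0⟩
  have hp : WithSeminorms
      (LinearMap.toSeminormFamily (topDualPairing ℝ Z) : Z → Seminorm ℝ (WeakDual ℝ Z)) :=
    (topDualPairing ℝ Z).weakBilin_withSeminorms
  have hq : Continuous fun x : WeakDual ℝ Z => ‖φ x‖ := φ.continuous.norm
  obtain ⟨s, C, hC0, hC⟩ :=
    Seminorm.bound_of_continuous hp ((normSeminorm ℝ ℝ).comp φ.toLinearMap) hq
  let L : {i // i ∈ s} → (WeakDual ℝ Z →ₗ[ℝ] ℝ) := fun i =>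
    { toFun := fun x => x (i : Z)
      map_add' := fun x y => rfl
      map_smul' := fun c x => rfl }
  have hker : (⨅ i, LinearMap.ker (L i)) ≤ LinearMap.ker φ.toLinearMap := by
    intro x hx
    simp only [Submodule.mem_iInf, LinearMap.mem_ker] at hx ⊢
    have h2 : (s.sup (LinearMap.toSeminormFamily (topDualPairing ℝ Z))) x ≤ 0 := by
      refine Seminorm.finset_sup_apply_le le_rfl fun i hi => ?_
      have := hx ⟨i, hi⟩
      simp only [L, LinearMap.coe_mk, AddHom.coe_mk] at this
      have h' : x i = 0 := this
      change ‖x i‖ ≤ 0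
      simp [h']
    have h1 := hC x
    simp only [Seminorm.comp_apply, Seminorm.smul_apply] at h1
    have : ‖φ x‖ ≤ 0 := by
      refine h1.trans ?_
      calc (C : ℝ) • (s.sup (LinearMap.toSeminormFamily (topDualPairing ℝ Z))) x
          ≤ (C : ℝ) • (0:ℝ) := by
            exact smul_le_smul_of_nonneg_left h2 (by positivity)
        _ = 0 := smul_zero _
    have hφx : ‖φ x‖ = 0 := le_antisymm this (norm_nonneg _)
    simpa using norm_eq_zero.mp hφx
  have hspan := mem_span_of_iInf_ker_le_ker hker
  rw [Submodule.mem_span_range_iff_exists_fun ℝ] at hspan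
  obtain ⟨c, hc⟩ := hspan
  refine ⟨∑ i, c i • (i : Z), fun x => ?_⟩
  have hx : φ x = (∑ i, c i • L i) x := by rw [hc]; rfl
  rw [hx]
  simp only [LinearMap.sum_apply, LinearMap.smul_apply, L, LinearMap.coe_mk, AddHom.coe_mk]
  rw [map_sum]
  simp [smul_eq_mul]
  rfl

end WeakDualAux

/-- A mean bounds from above by any pointwise upper bound. -/
lemma mean_le_of_forall_le {S : Type*} [AddCommSemigroup S] [TopologicalSpace S]
    [DiscreteTopology S] {m : (S →ᵇ ℝ) →L[ℝ] ℝ} (hm : IsAddInvariantMean m)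
    (h : S →ᵇ ℝ) (u : ℝ) (hu : ∀ t, h t ≤ u) : m h ≤ u := by
  obtain ⟨hpos, -, hone, -⟩ := hm
  have h0 : 0 ≤ m (u • const S (1 : ℝ) - h) := by
    refine hpos _ fun t => ?_
    simp only [coe_sub, coe_smul, const_apply, Pi.sub_apply, Pi.smul_apply, smul_eq_mul, mul_one]
    linarith [hu t]
  rw [map_sub, map_smul] at h0
  rw [hone] at h0
  simp only [smul_eq_mul, mul_one] at h0
  linarith

/-- (Ger-type selection theorem) Let `S` be a commutative semigroup admitting an invariant
mean and `X = Z*` a dual Banach space. A set-valued map `F` on `S` whose values are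
nonempty, convex, bounded and weak*-closed subsets of `X` admits an additive selection if
and only if there is a map `f : S → X` with `f (s + t) - f t ∈ F s` for all `s, t`. -/
theorem additive_selection_iff
    {S : Type*} [AddCommSemigroup S] [TopologicalSpace S] [DiscreteTopology S]
    {Z : Type*} [NormedAddCommGroup Z] [NormedSpace ℝ Z]
    (m : (S →ᵇ ℝ) →L[ℝ] ℝ) (hm : IsAddInvariantMean m)
    (F : S → Set (StrongDual ℝ Z))
    (hne : ∀ s, (F s).Nonempty)
    (hconv : ∀ s, Convex ℝ (F s))
    (hbdd : ∀ s, Bornology.IsBounded (F s))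
    (hclosed : ∀ s, IsClosed (StrongDual.toWeakDual '' F s)) :
    (∃ g : S → StrongDual ℝ Z,
        (∀ s t : S, g (s + t) = g s + g t) ∧ ∀ s : S, g s ∈ F s) ↔
    (∃ f : S → StrongDual ℝ Z, ∀ s t : S, f (s + t) - f t ∈ F s) := by
  constructor
  · rintro ⟨g, hadd, hsel⟩
    exact ⟨g, fun s t => by rw [hadd s t, add_sub_cancel_right]; exact hsel s⟩
  · rintro ⟨f, hf⟩
    obtain ⟨hpos, hnorm, hone, hinv⟩ := hm
    choose C hC using fun s => isBounded_iff_forall_norm_le.mp (hbdd s)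
    have hC0 : ∀ s, 0 ≤ C s := fun s => by
      obtain ⟨x, hx⟩ := hne s
      exact (norm_nonneg x).trans (hC s x hx)
    have hb : ∀ (s : S) (z : Z) (t : S), ‖(f (s + t) - f t) z‖ ≤ C s * ‖z‖ := by
      intro s z t
      calc ‖(f (s + t) - f t) z‖ ≤ ‖f (s + t) - f t‖ * ‖z‖ := (f (s + t) - f t).le_opNorm z
        _ ≤ C s * ‖z‖ := by
            have := hC s _ (hf s t)
            exact mul_le_mul_of_nonneg_right this (norm_nonneg z)
    let h : S → Z → (S →ᵇ ℝ) := fun s z =>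
      ofNormedAddCommGroupDiscrete (fun t => (f (s + t) - f t) z) (C s * ‖z‖) (hb s z)
    have happ : ∀ s z t, h s z t = (f (s + t) - f t) z := fun s z t => rfl
    have hnorm_le : ∀ s z, ‖h s z‖ ≤ C s * ‖z‖ := fun s z =>
      norm_ofNormedAddCommGroup_le continuous_of_discreteTopology
        (mul_nonneg (hC0 s) (norm_nonneg z)) (hb s z)
    let g : S → StrongDual ℝ Z := fun s =>
      LinearMap.mkContinuous
        { toFun := fun z => m (h s z)
          map_add' := fun z z' => by
            rw [← map_add]
            refine congrArg m ?_
            ext t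
            simp only [coe_add, Pi.add_apply, happ, map_add, ContinuousLinearMap.sub_apply]
          map_smul' := fun c z => by
            rw [RingHom.id_apply, ← map_smul]
            refine congrArg m ?_
            ext t
            simp only [coe_smul, Pi.smul_apply, happ, map_smul, ContinuousLinearMap.sub_apply,
              smul_eq_mul] }
        (C s)
        (fun z => by
          calc ‖m (h s z)‖ ≤ ‖m‖ * ‖h s z‖ := m.le_opNorm _
            _ = ‖h s z‖ := by rw [hnorm, one_mul]
            _ ≤ C s * ‖z‖ := hnorm_le s z)
    have gapp : ∀ s z, g s z = m (h s z) := fun s z => rfl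
    have gadd : ∀ s u : S, g (s + u) = g s + g u := by
      intro s u
      ext z
      have key : h (s + u) z = addTranslate (h s z) u + h u z := by
        ext t
        simp only [coe_add, Pi.add_apply, addTranslate, coe_compContinuous,
          ContinuousMap.coe_mk, Function.comp_apply, happ]
        have e1 : s + (t + u) = s + u + t := by
          rw [add_comm t u, ← add_assoc]
        have e2 : u + t = t + u := add_comm u t
        rw [e1, e2]
        simp only [ContinuousLinearMap.sub_apply]
        ring
      calc g (s + u) z = m (h (s + u) z) := rfl
        _ = m (addTranslate (h s z) u) + m (h u z) := by rw [key, map_add]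
        _ = m (h s z) + m (h u z) := by rw [hinv]
        _ = (g s + g u) z := rfl
    have gmem : ∀ s, g s ∈ F s := by
      intro s
      by_contra hgs
      have hgs' : StrongDual.toWeakDual (g s) ∉ StrongDual.toWeakDual '' F s := by
        rintro ⟨x, hx, he⟩
        exact hgs ((StrongDual.toWeakDual.injective he) ▸ hx)
      have hcimage : Convex ℝ (StrongDual.toWeakDual '' F s) :=
        (hconv s).linear_image StrongDual.toWeakDual.toLinearMap
      obtain ⟨φ, u, hlt, hgt⟩ :=
        geometric_hahn_banach_closed_point hcimage (hclosed s) hgs'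
      obtain ⟨z, hz⟩ := weakDual_dual_eval φ
      have hub : ∀ x ∈ F s, x z < u := by
        intro x hx
        have := hlt (StrongDual.toWeakDual x) ⟨x, hx, rfl⟩
        rwa [hz] at this
      have hgsz : u < g s z := by
        have := hgt
        rwa [hz] at this
      have : g s z ≤ u := by
        rw [gapp]
        refine mean_le_of_forall_le ⟨hpos, hnorm, hone, hinv⟩ _ u fun t => ?_
        rw [happ]
        exact (hub _ (hf s t)).le
      linarith
    exact ⟨g, gadd, gmem⟩
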